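/- Let K be a field and f(X,Y) = a_0(X) + a_1(X)Y + ... + a_m(X)Y^m with a_0, ..., a_m ∈ K[X] and a_0·a_m ≠ 0. Suppose a_m = p·q with p, q ∈ K[X] and p irreducible over K. If deg p > (m-1)·deg q + H_1(f), then f(X,Y) is irreducible as a polynomial in Y over the field K(X). -/

import Mathlib

open Polynomial

/-- Ω(p): number of irreducible factors of `p`, counted with multiplicity. -/
noncomputable def Omega {R : Type*} [CommMonoidWithZero R] [IsCancelMulZero R]
    [UniqueFactorizationMonoid R] (p : R) : ℕ :=
  Multiset.card (UniqueFactorizationMonoid.factors p)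

/-- H₁(f) for f = a₀ + a₁Y + ⋯ + aₘYᵐ : the max of the degrees of a₀,…,a_{m-1}. -/
noncomputable def H1 {K : Type*} [Field K] (a : ℕ → Polynomial K) (m : ℕ) : ℕ :=
  (Finset.range m).sup fun i => (a i).natDegree

/-- The key combinatorial lemma (a Newton-polygon / tropical argument):
if `g * h = ∑ aᵢ Yⁱ` with `aₘ = p q`, `p` irreducible with
`deg p > (m-1) deg q + H1`, `p` divides the leading coefficient of `g`, and
`h` has positive degree, then we get a contradiction. -/
lemma key_lemma {K : Type*} [Field K] (m : ℕ) (a : ℕ → Polynomial K)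
    (p q : Polynomial K) (ha0 : a 0 ≠ 0) (ham : a m ≠ 0)
    (hpq : a m = p * q) (hp : Irreducible p)
    (hdeg : p.natDegree > (m - 1) * q.natDegree + H1 a m)
    (g h : Polynomial (Polynomial K))
    (hgh : g * h = ∑ i ∈ Finset.range (m + 1), Polynomial.C (a i) * Polynomial.X ^ i)
    (hs : 1 ≤ h.natDegree)
    (hdvd : p ∣ g.leadingCoeff) : False := by
  classical
  -- coefficients of f = g * h
  have hcoeff : ∀ i, (g * h).coeff i = if i ≤ m then a i else 0 := by
    intro i
    rw [hgh]
    simp only [Polynomial.finset_sum_coeff, Polynomial.coeff_C_mul, Polynomial.coeff_X_pow,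
      mul_ite, mul_one, mul_zero]
    rw [Finset.sum_ite_eq (Finset.range (m + 1)) i a]
    simp [Nat.lt_succ_iff]
  have hcm : (g * h).coeff m = a m := by simp [hcoeff]
  have hf0 : g * h ≠ 0 := fun h0 => ham (by rw [← hcm, h0, Polynomial.coeff_zero])
  have hg0 : g ≠ 0 := fun h0 => hf0 (by rw [h0, zero_mul])
  have hh0 : h ≠ 0 := fun h0 => hf0 (by rw [h0, mul_zero])
  have hfdeg : (g * h).natDegree = m := by
    apply le_antisymm
    · rw [Polynomial.natDegree_le_iff_coeff_eq_zero]
      intro N hN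
      rw [hcoeff]
      exact if_neg (by omega)
    · exact Polynomial.le_natDegree_of_ne_zero (hcm ▸ ham)
  have hrs : g.natDegree + h.natDegree = m := by
    rw [← Polynomial.natDegree_mul hg0 hh0, hfdeg]
  have hm : 0 < m := by omega
  set r := g.natDegree with hr
  set s := h.natDegree with hsdef
  set D := p.natDegree with hD
  set d := q.natDegree with hd
  set H := H1 a m with hH
  have hq0 : q ≠ 0 := fun h0 => ham (by rw [hpq, h0, mul_zero])
  have hDd : (a m).natDegree = D + d := by
    rw [hpq, Polynomial.natDegree_mul hp.ne_zero hq0]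
  have hlcg : g.leadingCoeff ≠ 0 := Polynomial.leadingCoeff_ne_zero.mpr hg0
  have hlch : h.leadingCoeff ≠ 0 := Polynomial.leadingCoeff_ne_zero.mpr hh0
  have hlc : g.leadingCoeff * h.leadingCoeff = a m := by
    rw [← Polynomial.leadingCoeff_mul, Polynomial.leadingCoeff, hfdeg, hcm]
  have hBr : D ≤ g.leadingCoeff.natDegree := Polynomial.natDegree_le_of_dvd hdvd hlcg
  have hBC : g.leadingCoeff.natDegree + h.leadingCoeff.natDegree = D + d := by
    rw [← Polynomial.natDegree_mul hlcg hlch, hlc, hDd]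
  have hCs : h.leadingCoeff.natDegree ≤ d := by omega
  have hHb : ∀ i < m, (a i).natDegree ≤ H := by
    intro i hi
    have h' : (a i).natDegree ≤ (Finset.range m).sup fun j => (a j).natDegree :=
      Finset.le_sup (f := fun j => (a j).natDegree) (Finset.mem_range.mpr hi)
    rw [hH]
    unfold H1
    exact h'
  have hdeg' : (m - 1) * d + H + 1 ≤ D := hdeg
  -- the tropical weight
  set L : ℤ := 2 * m * d + 1 with hL
  set v : Polynomial (Polynomial K) → ℕ → ℤ :=
    fun P j => 2 * m * ((P.coeff j).natDegree : ℤ) - L * j with hv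
  have hgne : g.support.Nonempty := Polynomial.nonempty_support_iff.mpr hg0
  have hhne : h.support.Nonempty := Polynomial.nonempty_support_iff.mpr hh0
  set Mg := g.support.sup' hgne (v g) with hMg
  set Mh := h.support.sup' hhne (v h) with hMh
  -- maximal attaining indices
  have exg : ∃ i, i ∈ g.support ∧ Mg = v g i := Finset.exists_mem_eq_sup' hgne (v g)
  have exh : ∃ i, i ∈ h.support ∧ Mh = v h i := Finset.exists_mem_eq_sup' hhne (v h)
  obtain ⟨ug, hug, hugv⟩ := exg
  obtain ⟨uh, huh, huhv⟩ := exh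
  set Tg := g.support.filter (fun j => v g j = Mg) with hTg
  set Th := h.support.filter (fun j => v h j = Mh) with hTh
  have hTgne : Tg.Nonempty := ⟨ug, Finset.mem_filter.mpr ⟨hug, hugv.symm⟩⟩
  have hThne : Th.Nonempty := ⟨uh, Finset.mem_filter.mpr ⟨huh, huhv.symm⟩⟩
  set kg := Tg.max' hTgne with hkg
  set kh := Th.max' hThne with hkh
  have hkgmem : kg ∈ g.support ∧ v g kg = Mg := Finset.mem_filter.mp (Tg.max'_mem hTgne)
  have hkhmem : kh ∈ h.support ∧ v h kh = Mh := Finset.mem_filter.mp (Th.max'_mem hThne)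
  have hgle : ∀ j ∈ g.support, v g j ≤ Mg := fun j hj => Finset.le_sup' (v g) hj
  have hhle : ∀ j ∈ h.support, v h j ≤ Mh := fun j hj => Finset.le_sup' (v h) hj
  have hglt : ∀ j ∈ g.support, kg < j → v g j < Mg := by
    intro j hj hlt
    rcases lt_or_eq_of_le (hgle j hj) with h' | h'
    · exact h'
    · exact absurd (Tg.le_max' j (Finset.mem_filter.mpr ⟨hj, h'⟩)) (by omega)
  have hhlt : ∀ j ∈ h.support, kh < j → v h j < Mh := by
    intro j hj hlt
    rcases lt_or_eq_of_le (hhle j hj) with h' | h'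
    · exact h'
    · exact absurd (Th.le_max' j (Finset.mem_filter.mpr ⟨hj, h'⟩)) (by omega)
  clear_value kg kh Tg Th Mg Mh v L
  have hgkg : g.coeff kg ≠ 0 := Polynomial.mem_support_iff.mp hkgmem.1
  have hhkh : h.coeff kh ≠ 0 := Polynomial.mem_support_iff.mp hkhmem.1
  -- main tropical claim: the coefficient at index kg + kh is nonzero with exact degree
  have hmainne : g.coeff kg * h.coeff kh ≠ 0 := mul_ne_zero hgkg hhkh
  have hmain : (g * h).coeff (kg + kh) ≠ 0 ∧
      ((g * h).coeff (kg + kh)).natDegree =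
        (g.coeff kg).natDegree + (h.coeff kh).natDegree := by
    have hsplit : (g * h).coeff (kg + kh) =
        g.coeff kg * h.coeff kh +
          ∑ x ∈ (Finset.HasAntidiagonal.antidiagonal (kg + kh)).erase (kg, kh),
            g.coeff x.1 * h.coeff x.2 := by
      rw [Polynomial.coeff_mul]
      exact (Finset.add_sum_erase (Finset.HasAntidiagonal.antidiagonal (kg + kh)) (fun x => g.coeff x.1 * h.coeff x.2) (a := (kg, kh)) (Finset.HasAntidiagonal.mem_antidiagonal.mpr rfl)).symm
    have hTlt : ∀ x ∈ (Finset.HasAntidiagonal.antidiagonal (kg + kh)).erase (kg, kh),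
        (g.coeff x.1 * h.coeff x.2).degree < (g.coeff kg * h.coeff kh).degree := by
      rintro ⟨u, w⟩ hx
      have hxne : (u, w) ≠ (kg, kh) := Finset.ne_of_mem_erase hx
      have hxad : u + w = kg + kh := by
        have := Finset.mem_of_mem_erase hx
        simpa [Finset.HasAntidiagonal.mem_antidiagonal] using this
      by_cases hu0 : g.coeff u = 0
      · rw [hu0, zero_mul, Polynomial.degree_zero]
        exact Ne.bot_lt (fun hc => hmainne (Polynomial.degree_eq_bot.mp hc))
      by_cases hw0 : h.coeff w = 0
      · rw [hw0, mul_zero, Polynomial.degree_zero]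
        exact Ne.bot_lt (fun hc => hmainne (Polynomial.degree_eq_bot.mp hc))
      have husup : u ∈ g.support := Polynomial.mem_support_iff.mpr hu0
      have hwsup : w ∈ h.support := Polynomial.mem_support_iff.mpr hw0
      have hstrict : v g u + v h w < v g kg + v h kh := by
        have hune : u ≠ kg := fun hc => hxne (by simp [hc, show w = kh by omega])
        rcases lt_or_gt_of_ne hune with h' | h'
        · have hw' : kh < w := by omega
          have := hhlt w hwsup hw'
          have := hgle u husup
          rw [hkgmem.2, hkhmem.2]; omega
        · have := hglt u husup h'
          have := hhle w hwsup
          rw [hkgmem.2, hkhmem.2]; omega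
      have hndlt : (g.coeff u * h.coeff w).natDegree <
          (g.coeff kg * h.coeff kh).natDegree := by
        rw [Polynomial.natDegree_mul hu0 hw0, Polynomial.natDegree_mul hgkg hhkh]
        have : 2 * (m : ℤ) * ((g.coeff u).natDegree + (h.coeff w).natDegree) <
            2 * m * ((g.coeff kg).natDegree + (h.coeff kh).natDegree) := by
          have hxad' : (u : ℤ) + w = (kg : ℤ) + kh := by exact_mod_cast hxad
          simp only [hv] at hstrict
          have hLsum : L * (u : ℤ) + L * (w : ℤ) = L * (kg : ℤ) + L * (kh : ℤ) := by
            rw [← mul_add, ← mul_add, hxad']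
          push_cast at hstrict ⊢
          linarith [hstrict, hLsum]
        have hm' := lt_of_mul_lt_mul_left this (by positivity : (0:ℤ) ≤ 2 * (m:ℤ))
        exact_mod_cast hm'
      exact Polynomial.degree_lt_degree hndlt
    have hTdeg : (∑ x ∈ (Finset.HasAntidiagonal.antidiagonal (kg + kh)).erase (kg, kh),
        g.coeff x.1 * h.coeff x.2).degree < (g.coeff kg * h.coeff kh).degree := by
      refine lt_of_le_of_lt (Polynomial.degree_sum_le _ _) ?_
      rw [Finset.sup_lt_iff
        (Ne.bot_lt (fun hc => hmainne (Polynomial.degree_eq_bot.mp hc)))]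
      exact hTlt
    have hdegeq : ((g * h).coeff (kg + kh)).degree = (g.coeff kg * h.coeff kh).degree := by
      rw [hsplit]
      exact Polynomial.degree_add_eq_left_of_degree_lt hTdeg
    constructor
    · intro hc
      rw [hc, Polynomial.degree_zero] at hdegeq
      exact hmainne (Polynomial.degree_eq_bot.mp hdegeq.symm)
    · rw [Polynomial.natDegree_eq_of_degree_eq hdegeq,
        Polynomial.natDegree_mul hgkg hhkh]
  -- bounds on the attaining indices
  have hkgr : kg ≤ r := Polynomial.le_natDegree_of_ne_zero hgkg
  have hkhs : kh ≤ s := Polynomial.le_natDegree_of_ne_zero hhkh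
  -- leading indices are in the supports
  have hrsup : r ∈ g.support := Polynomial.mem_support_iff.mpr hlcg
  have hssup : s ∈ h.support := Polynomial.mem_support_iff.mpr hlch
  have hMgr : v g r ≤ Mg := hgle r hrsup
  have hMhs : v h s ≤ Mh := hhle s hssup
  -- claim : kg + kh = m
  have hsum : kg + kh = m := by
    by_contra hne
    have hlt : kg + kh < m := by omega
    have hco : (g * h).coeff (kg + kh) = a (kg + kh) := by
      rw [hcoeff]; exact if_pos (by omega)
    have hane : a (kg + kh) ≠ 0 := hco ▸ hmain.1
    have haH : (a (kg + kh)).natDegree ≤ H := hHb _ hlt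
    -- Mg + Mh equals the weight of the coefficient at kg+kh
    have hMsum : Mg + Mh = 2 * m * (((g * h).coeff (kg + kh)).natDegree : ℤ)
        - L * (kg + kh) := by
      rw [hmain.2, ← hkgmem.2, ← hkhmem.2]
      simp only [hv]
      push_cast
      ring
    have hup : Mg + Mh ≤ 2 * m * (H : ℤ) := by
      rw [hMsum, hco]
      have h1 : ((a (kg + kh)).natDegree : ℤ) ≤ H := by exact_mod_cast haH
      have h2 : (0 : ℤ) ≤ L * (kg + kh) := by
        have : (0 : ℤ) ≤ L := by simp only [hL]; positivity
        positivity
      have h3 := mul_le_mul_of_nonneg_left h1 (by positivity : (0:ℤ) ≤ 2 * (m:ℤ))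
      linarith [h2, h3]
    have hlow : 2 * m * ((D : ℤ) + d) - L * m ≤ Mg + Mh := by
      have : v g r + v h s ≤ Mg + Mh := by omega
      refine le_trans (le_of_eq ?_) this
      simp only [hv]
      have : ((g.leadingCoeff.natDegree : ℤ)) + (h.leadingCoeff.natDegree : ℤ)
          = (D : ℤ) + d := by exact_mod_cast hBC
      have hrs' : (r : ℤ) + s = m := by exact_mod_cast hrs
      rw [show (g.coeff r) = g.leadingCoeff from rfl,
        show (h.coeff s) = h.leadingCoeff from rfl]
      push_cast
      linear_combination (-(2*(m:ℤ))) * this + L * hrs'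
    -- contradiction with hdeg'
    have hd1 : ((m : ℤ) - 1) * d + H + 1 ≤ D := by
      have : ((m - 1 : ℕ) : ℤ) = (m : ℤ) - 1 := by
        have : 1 ≤ m := hm
        push_cast [Nat.cast_sub this]
        ring
      have h2 : (((m - 1) * d + H + 1 : ℕ) : ℤ) ≤ (D : ℤ) := by exact_mod_cast hdeg'
      push_cast at h2
      rw [this] at h2
      linarith
    have hmz : (1 : ℤ) ≤ m := by exact_mod_cast hm
    simp only [hL] at hup hlow
    have hprod := mul_le_mul_of_nonneg_left hd1 (by positivity : (0:ℤ) ≤ 2 * (m:ℤ))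
    have hd0 : (0:ℤ) ≤ (d:ℤ) := by positivity
    linarith only [hup, hlow, hprod, hmz]
  have hkgr' : kg = r := by omega
  have hkhs' : kh = s := by omega
  -- conclude: the constant coefficient of h is too small
  have hc00 : h.coeff 0 ≠ 0 := by
    intro hc
    have := Polynomial.mul_coeff_zero g h
    rw [hc, mul_zero] at this
    have h0 : (g * h).coeff 0 = a 0 := by rw [hcoeff]; exact if_pos (by omega)
    exact ha0 (by rw [← h0, this])
  have h0sup : (0 : ℕ) ∈ h.support := Polynomial.mem_support_iff.mpr hc00
  have hfin : v h 0 ≤ v h s := by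
    rw [hkhs'] at hkhmem
    rw [hkhmem.2]
    exact hhle 0 h0sup
  simp only [hv] at hfin
  have hCs' : ((h.coeff s).natDegree : ℤ) ≤ d := by
    exact_mod_cast hCs
  have hs' : (1 : ℤ) ≤ s := by exact_mod_cast hs
  have hmz : (1 : ℤ) ≤ m := by exact_mod_cast hm
  have h00 : (0 : ℤ) ≤ ((h.coeff 0).natDegree : ℤ) := by positivity
  simp only [hL] at hfin
  push_cast at hfin
  have hp1 := mul_le_mul_of_nonneg_left hCs' (by positivity : (0:ℤ) ≤ 2 * (m:ℤ))
  have hp2 := mul_le_mul_of_nonneg_left hs' (by positivity : (0:ℤ) ≤ 2 * (m:ℤ) * d + 1)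
  have hp3 : (0:ℤ) ≤ 2 * (m:ℤ) * ((h.coeff 0).natDegree : ℤ) := by positivity
  linarith [hfin, hp1, hp2, hp3]

theorem stmt3 {K : Type*} [Field K] (m : ℕ) (hm : 0 < m)
    (a : ℕ → Polynomial K) (p q : Polynomial K)
    (ha0 : a 0 ≠ 0) (ham : a m ≠ 0)
    (hpq : a m = p * q) (hp : Irreducible p)
    (f : Polynomial (Polynomial K))
    (hf : f = ∑ i ∈ Finset.range (m + 1), Polynomial.C (a i) * Polynomial.X ^ i)
    (hdeg : p.natDegree > (m - 1) * q.natDegree + H1 a m) :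
    Irreducible (f.map (algebraMap (Polynomial K) (RatFunc K))) := by
  classical
  have hcoeff : ∀ i, f.coeff i = if i ≤ m then a i else 0 := by
    intro i
    rw [hf]
    simp only [Polynomial.finset_sum_coeff, Polynomial.coeff_C_mul, Polynomial.coeff_X_pow,
      mul_ite, mul_one, mul_zero]
    rw [Finset.sum_ite_eq (Finset.range (m + 1)) i a]
    simp [Nat.lt_succ_iff]
  have hcm : f.coeff m = a m := by simp [hcoeff]
  have hf0 : f ≠ 0 := fun h0 => ham (by rw [← hcm, h0, Polynomial.coeff_zero])
  have hfdeg : f.natDegree = m := by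
    apply le_antisymm
    · rw [Polynomial.natDegree_le_iff_coeff_eq_zero]
      intro N hN
      rw [hcoeff]
      exact if_neg (by omega)
    · exact Polynomial.le_natDegree_of_ne_zero (hcm ▸ ham)
  have hcont : f.content ≠ 0 := fun hc => hf0 (Polynomial.content_eq_zero_iff.mp hc)
  -- it suffices to prove irreducibility of the primitive part
  have hprim : f.primPart.IsPrimitive := f.isPrimitive_primPart
  have hirred : Irreducible f.primPart := by
    constructor
    · intro hu
      have := Polynomial.natDegree_eq_zero_of_isUnit hu
      rw [Polynomial.natDegree_primPart, hfdeg] at this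
      omega
    · intro g h hgh
      by_contra hcon
      push_neg at hcon
      obtain ⟨hgu, hhu⟩ := hcon
      have hg0 : g ≠ 0 := by
        intro h0
        rw [h0, zero_mul] at hgh
        exact f.primPart_ne_zero hgh
      have hh0 : h ≠ 0 := by
        intro h0
        rw [h0, mul_zero] at hgh
        exact f.primPart_ne_zero hgh
      have hgd : 1 ≤ g.natDegree := by
        rcases Nat.eq_zero_or_pos g.natDegree with h0 | h1
        · obtain ⟨u, hu⟩ := Polynomial.natDegree_eq_zero.mp h0
          have : Polynomial.C u ∣ f.primPart := ⟨h, by rw [hu, hgh]⟩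
          have := hprim u this
          exact absurd (hu ▸ this.map Polynomial.C) hgu
        · exact h1
      have hhd : 1 ≤ h.natDegree := by
        rcases Nat.eq_zero_or_pos h.natDegree with h0 | h1
        · obtain ⟨u, hu⟩ := Polynomial.natDegree_eq_zero.mp h0
          have : Polynomial.C u ∣ f.primPart := ⟨g, by rw [hu, hgh, mul_comm]⟩
          have := hprim u this
          exact absurd (hu ▸ this.map Polynomial.C) hhu
        · exact h1
      -- the factorization of f itself
      have hffact : (Polynomial.C f.content * g) * h =
          ∑ i ∈ Finset.range (m + 1), Polynomial.C (a i) * Polynomial.X ^ i := by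
        rw [mul_assoc, ← hgh, ← Polynomial.eq_C_content_mul_primPart, hf]
      have hlc : (Polynomial.C f.content * g).leadingCoeff * h.leadingCoeff = a m := by
        rw [← Polynomial.leadingCoeff_mul, hffact, ← hf, Polynomial.leadingCoeff, hfdeg, hcm]
      have hpprime : Prime p := hp.prime
      have hpdvd : p ∣ (Polynomial.C f.content * g).leadingCoeff * h.leadingCoeff := by
        rw [hlc, hpq]; exact dvd_mul_right p q
      rcases hpprime.dvd_mul.mp hpdvd with hcase | hcase
      · exact key_lemma m a p q ha0 ham hpq hp hdeg
          (Polynomial.C f.content * g) h hffact hhd hcase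
      · refine key_lemma m a p q ha0 ham hpq hp hdeg
          h (Polynomial.C f.content * g) (by rw [mul_comm]; exact hffact) ?_ hcase
        rw [Polynomial.natDegree_C_mul hcont]
        exact hgd
  have hmap : Irreducible (f.primPart.map (algebraMap (Polynomial K) (RatFunc K))) :=
    hprim.irreducible_iff_irreducible_map_fraction_map.mp hirred
  have hassoc : Associated (f.primPart.map (algebraMap (Polynomial K) (RatFunc K)))
      (f.map (algebraMap (Polynomial K) (RatFunc K))) := by
    have hfc : f.map (algebraMap (Polynomial K) (RatFunc K)) =
        Polynomial.C (algebraMap (Polynomial K) (RatFunc K) f.content) *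
          f.primPart.map (algebraMap (Polynomial K) (RatFunc K)) := by
      conv_lhs => rw [f.eq_C_content_mul_primPart]
      rw [Polynomial.map_mul, Polynomial.map_C]
    rw [hfc]
    have hu : IsUnit (Polynomial.C (algebraMap (Polynomial K) (RatFunc K) f.content)) := by
      rw [Polynomial.isUnit_C]
      refine isUnit_iff_ne_zero.mpr ?_
      intro hc
      exact hcont ((map_eq_zero_iff _ (IsFractionRing.injective (Polynomial K) (RatFunc K))).mp hc)
    exact (associated_unit_mul_left _ _ hu).symm
  exact hassoc.irreducible hmap
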